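/- Let r, s, r′, s′ ≥ 1. Let f : Ω_{r,s} → Ω_{r′,s′} be a continuous map, and let g be a continuous map from the closure of D_{r,s} in ℙ^{r+s−1} to the closure of D_{r′,s′} in ℙ^{r′+s′−1} such that g maps the boundary ∂D_{r,s} = {[z] : |z₁|² + ⋯ + |z_r|² = |z_{r+1}|² + ⋯ + |z_{r+s}|²} into ∂D_{r′,s′}. Suppose that for every Z ∈ Ω_{r,s} and every nonzero row vector a ∈ ℂ^r, writing g([a, aZ]) = [a′, b′] with a′ ∈ ℂ^{r′} and b′ ∈ ℂ^{s′}, one has a′ · f(Z) = b′. Then f is a proper map, i.e., the preimage under f of every compact subset of Ω_{r′,s′} is compact. -/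

import Mathlib

open Matrix
open scoped ComplexOrder LinearAlgebra.Projectivization
open Filter Topology
open scoped Classical

/-- The quotient topology on projectivizations (a point of `ℙ K V` is an equivalence class
of nonzero vectors of `V`). -/
noncomputable instance {K V : Type*} [DivisionRing K] [AddCommGroup V] [Module K V]
    [TopologicalSpace V] : TopologicalSpace (ℙ K V) :=
  instTopologicalSpaceQuotient

/-- The type I bounded symmetric domain `Ω_{r,s}`. -/
def OmegaI (r s : ℕ) : Set (Matrix (Fin r) (Fin s) ℂ) :=
  {Z | (1 - Z * Zᴴ).PosDef}

/-- The generalized ball `D_{r,s} ⊂ ℙ^{r+s-1}`, i.e. the points whose homogeneous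
coordinates satisfy `|z₁|² + ⋯ + |z_r|² > |z_{r+1}|² + ⋯ + |z_{r+s}|²`. -/
def genBall (r s : ℕ) : Set (ℙ ℂ (Fin (r + s) → ℂ)) :=
  {p | ∑ j : Fin s, ‖p.rep (Fin.natAdd r j)‖ ^ 2 < ∑ i : Fin r, ‖p.rep (Fin.castAdd s i)‖ ^ 2}

/-- The boundary `∂D_{r,s}`: points whose homogeneous coordinates satisfy
`|z₁|² + ⋯ + |z_r|² = |z_{r+1}|² + ⋯ + |z_{r+s}|²`. -/
def genBallBdry (r s : ℕ) : Set (ℙ ℂ (Fin (r + s) → ℂ)) :=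
  {p | ∑ i : Fin r, ‖p.rep (Fin.castAdd s i)‖ ^ 2 = ∑ j : Fin s, ‖p.rep (Fin.natAdd r j)‖ ^ 2}

/- ### Auxiliary lemmas -/

lemma quadForm {m n : ℕ} (Z : Matrix (Fin m) (Fin n) ℂ) (a : Fin m → ℂ) :
    star a ⬝ᵥ ((1 - Z * Zᴴ) *ᵥ a)
      = (((∑ i, ‖a i‖ ^ 2) - ∑ j, ‖(star a ᵥ* Z) j‖ ^ 2 : ℝ) : ℂ) := by
  have h1 : star a ⬝ᵥ (1 *ᵥ a) = (((∑ i, ‖a i‖ ^ 2 : ℝ)) : ℂ) := by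
    rw [one_mulVec]
    simp [dotProduct, Complex.conj_mul', Complex.ofReal_sum]
  have h2 : star a ⬝ᵥ ((Z * Zᴴ) *ᵥ a)
      = (((∑ j, ‖(star a ᵥ* Z) j‖ ^ 2 : ℝ)) : ℂ) := by
    have hZa : Zᴴ *ᵥ a = star (star a ᵥ* Z) := by
      rw [star_vecMul, star_star]
    rw [← mulVec_mulVec, dotProduct_mulVec, hZa]
    simp [dotProduct, Complex.mul_conj', Complex.ofReal_sum]
  rw [sub_mulVec, dotProduct_sub, h1, h2, ← Complex.ofReal_sub]

lemma row_lt_of_posDef {m n : ℕ} {Z : Matrix (Fin m) (Fin n) ℂ}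
    (h : (1 - Z * Zᴴ).PosDef) {b : Fin m → ℂ} (hb : b ≠ 0) :
    ∑ j, ‖(b ᵥ* Z) j‖ ^ 2 < ∑ i, ‖b i‖ ^ 2 := by
  have hx : (star b : Fin m → ℂ) ≠ 0 := star_ne_zero.2 hb
  have := (posDef_iff_dotProduct_mulVec.mp h).2 hx
  rw [quadForm] at this
  have hb' : star (star b) = b := star_star b
  rw [hb'] at this
  have hnorm : ∑ i, ‖(star b) i‖ ^ 2 = ∑ i, ‖b i‖ ^ 2 := by
    simp [norm_star]
  rw [hnorm] at this
  have := Complex.zero_lt_real.mp this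
  linarith

lemma exists_row_ge_of_not_posDef {m n : ℕ} {Z : Matrix (Fin m) (Fin n) ℂ}
    (h : ¬ (1 - Z * Zᴴ).PosDef) :
    ∃ b : Fin m → ℂ, b ≠ 0 ∧ ∑ i, ‖b i‖ ^ 2 ≤ ∑ j, ‖(b ᵥ* Z) j‖ ^ 2 := by
  have herm : (1 - Z * Zᴴ).IsHermitian :=
    (isHermitian_one).sub (isHermitian_mul_conjTranspose_self Z)
  rw [Matrix.posDef_iff_dotProduct_mulVec] at h
  push_neg at h
  obtain ⟨x, hx, hle⟩ := h herm
  refine ⟨star x, star_ne_zero.2 hx, ?_⟩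
  rw [quadForm] at hle
  have : ¬ (0:ℝ) < (∑ i, ‖x i‖ ^ 2) - ∑ j, ‖(star x ᵥ* Z) j‖ ^ 2 := by
    intro hc
    exact absurd (Complex.zero_lt_real.mpr hc) hle
  push_neg at this
  have hnorm : ∑ i, ‖(star x) i‖ ^ 2 = ∑ i, ‖x i‖ ^ 2 := by simp [norm_star]
  rw [hnorm]
  clear hle
  linarith

lemma append_ne_zero {m n : ℕ} {a : Fin m → ℂ} (ha : a ≠ 0) (b : Fin n → ℂ) :
    Fin.append a b ≠ 0 := by
  intro h
  apply ha
  funext i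
  have := congrFun h (Fin.castAdd n i)
  rwa [Fin.append_left] at this

lemma rep_smul {N : ℕ} (v : Fin N → ℂ) (hv : v ≠ 0) :
    ∃ c : ℂ, c ≠ 0 ∧ ∀ i, (Projectivization.mk ℂ v hv).rep i = c * v i := by
  obtain ⟨c, hc⟩ := Projectivization.exists_smul_eq_mk_rep ℂ v hv
  exact ⟨(c : ℂ), c.ne_zero, fun i => by rw [← hc]; simp [Units.smul_def]⟩

lemma sum_sq_rep {N : ℕ} (v : Fin N → ℂ) (hv : v ≠ 0) :
    ∃ t : ℝ, 0 < t ∧ ∀ (k : ℕ) (e : Fin k → Fin N),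
      ∑ i, ‖(Projectivization.mk ℂ v hv).rep (e i)‖ ^ 2 = t * ∑ i, ‖v (e i)‖ ^ 2 := by
  obtain ⟨c, hc, hrep⟩ := rep_smul v hv
  refine ⟨‖c‖ ^ 2, pow_pos (norm_pos_iff.mpr hc) 2, fun k e => ?_⟩
  rw [Finset.mul_sum]
  congr 1
  funext i
  rw [hrep, norm_mul, mul_pow]

lemma mk_mem_genBall_iff {r s : ℕ} (v : Fin (r + s) → ℂ) (hv : v ≠ 0) :
    Projectivization.mk ℂ v hv ∈ genBall r s ↔
      ∑ j : Fin s, ‖v (Fin.natAdd r j)‖ ^ 2 < ∑ i : Fin r, ‖v (Fin.castAdd s i)‖ ^ 2 := by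
  obtain ⟨t, ht, h⟩ := sum_sq_rep v hv
  unfold genBall
  rw [Set.mem_setOf_eq, h s (Fin.natAdd r), h r (Fin.castAdd s), mul_lt_mul_iff_right₀ ht]

lemma mk_mem_bdry_iff {r s : ℕ} (v : Fin (r + s) → ℂ) (hv : v ≠ 0) :
    Projectivization.mk ℂ v hv ∈ genBallBdry r s ↔
      ∑ i : Fin r, ‖v (Fin.castAdd s i)‖ ^ 2 = ∑ j : Fin s, ‖v (Fin.natAdd r j)‖ ^ 2 := by
  obtain ⟨t, ht, h⟩ := sum_sq_rep v hv
  unfold genBallBdry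
  rw [Set.mem_setOf_eq, h s (Fin.natAdd r), h r (Fin.castAdd s)]
  exact mul_right_injective₀ ht.ne' |>.eq_iff

/- ### The projectivization quotient map is open -/

noncomputable def prMap (N : ℕ) : {v : Fin N → ℂ // v ≠ 0} → ℙ ℂ (Fin N → ℂ) :=
  fun v => Projectivization.mk ℂ v.1 v.2

lemma isQuotientMap_prMap (N : ℕ) : Topology.IsQuotientMap (prMap N) :=
  isQuotientMap_quotient_mk'

lemma isOpenMap_prMap (N : ℕ) : IsOpenMap (prMap N) := by
  intro U hU
  rw [← (isQuotientMap_prMap N).isOpen_preimage]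
  have hset : prMap N ⁻¹' (prMap N '' U) = ⋃ c : ℂˣ,
      (fun w : {v : Fin N → ℂ // v ≠ 0} =>
        (⟨(c : ℂ) • w.1, smul_ne_zero c.ne_zero w.2⟩ : {v : Fin N → ℂ // v ≠ 0})) ⁻¹' U := by
    ext w
    simp only [Set.mem_preimage, Set.mem_image, Set.mem_iUnion]
    constructor
    · rintro ⟨u, hu, heq⟩
      obtain ⟨c, hc⟩ := (Projectivization.mk_eq_mk_iff ℂ u.1 w.1 u.2 w.2).mp heq
      refine ⟨c, ?_⟩
      have : (⟨(c : ℂ) • w.1, smul_ne_zero c.ne_zero w.2⟩ : {v : Fin N → ℂ // v ≠ 0}) = u :=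
        Subtype.ext hc
      rwa [this]
    · rintro ⟨c, hc⟩
      refine ⟨_, hc, ?_⟩
      exact (Projectivization.mk_eq_mk_iff ℂ _ w.1 _ w.2).mpr ⟨c, rfl⟩
  rw [hset]
  exact isOpen_iUnion fun c => hU.preimage
    (Continuous.subtype_mk ((continuous_const_smul _).comp continuous_subtype_val) _)

lemma surjective_prMap (N : ℕ) : Function.Surjective (prMap N) :=
  fun p => ⟨⟨p.rep, p.rep_nonzero⟩, p.mk_rep⟩

lemma isOpenQuotientMap_prMap (N : ℕ) : IsOpenQuotientMap (prMap N) :=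
  ⟨surjective_prMap N, (isQuotientMap_prMap N).continuous, isOpenMap_prMap N⟩

/- ### Continuity helpers -/

lemma continuous_vecMul_right {m n : ℕ} (a : Fin m → ℂ) :
    Continuous fun Z : Matrix (Fin m) (Fin n) ℂ => a ᵥ* Z := by
  refine continuous_pi fun j => ?_
  simp only [Matrix.vecMul, dotProduct]
  exact continuous_finset_sum _ fun i _ =>
    (continuous_const.mul ((continuous_apply j).comp (continuous_apply i)))

lemma continuous_pair_vecMul {m n : ℕ} {X : Type*} [TopologicalSpace X]
    {u : X → (Fin m → ℂ)} {M : X → Matrix (Fin m) (Fin n) ℂ}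
    (hu : Continuous u) (hM : Continuous M) :
    Continuous fun x => (u x) ᵥ* (M x) := by
  refine continuous_pi fun j => ?_
  simp only [Matrix.vecMul, dotProduct]
  exact continuous_finset_sum _ fun i _ =>
    (((continuous_apply i).comp hu).mul
      (((continuous_apply j).comp ((continuous_apply i).comp hM))))

lemma continuous_appendFun {m n : ℕ} {X : Type*} [TopologicalSpace X]
    {u : X → (Fin m → ℂ)} {v : X → (Fin n → ℂ)}
    (hu : Continuous u) (hv : Continuous v) :
    Continuous fun x => Fin.append (u x) (v x) := by
  refine continuous_pi fun k => ?_
  induction k using Fin.addCases with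
  | left i => simpa only [Fin.append_left, Function.comp_def] using (continuous_apply i).comp hu
  | right j => simpa only [Fin.append_right, Function.comp_def] using (continuous_apply j).comp hv

/- ### The closed incidence relation -/

def relSet (r' s' : ℕ) :
    Set (Matrix (Fin r') (Fin s') ℂ × ℙ ℂ (Fin (r' + s') → ℂ)) :=
  {x | ∀ (v : Fin (r' + s') → ℂ) (hv : v ≠ 0), x.2 = Projectivization.mk ℂ v hv →
    (fun i => v (Fin.castAdd s' i)) ᵥ* x.1 = fun j => v (Fin.natAdd r' j)}

lemma isClosed_relSet (r' s' : ℕ) : IsClosed (relSet r' s') := by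
  have hq : Topology.IsQuotientMap (Prod.map (id : Matrix (Fin r') (Fin s') ℂ → _)
      (prMap (r' + s'))) :=
    ((IsOpenQuotientMap.id).prodMap (isOpenQuotientMap_prMap (r' + s'))).isQuotientMap
  rw [← hq.isClosed_preimage]
  have hset : Prod.map (id : Matrix (Fin r') (Fin s') ℂ → _) (prMap (r' + s')) ⁻¹' relSet r' s'
      = {y : Matrix (Fin r') (Fin s') ℂ × {v : Fin (r' + s') → ℂ // v ≠ 0} |
          (fun i => y.2.1 (Fin.castAdd s' i)) ᵥ* y.1 = fun j => y.2.1 (Fin.natAdd r' j)} := by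
    ext ⟨W, w⟩
    simp only [Set.mem_preimage, Set.mem_setOf_eq, Prod.map, relSet]
    constructor
    · intro h
      exact h w.1 w.2 rfl
    · intro h v hv hveq
      obtain ⟨c, hc⟩ := (Projectivization.mk_eq_mk_iff ℂ w.1 v w.2 hv).mp hveq
      have hw : w.1 = (c : ℂ) • v := by rw [← hc]; rfl
      have h' := h
      rw [hw] at h'
      have hsm : (fun i => ((c : ℂ) • v) (Fin.castAdd s' i))
          = (c : ℂ) • fun i => v (Fin.castAdd s' i) := rfl
      rw [hsm, Matrix.smul_vecMul] at h'
      funext j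
      have := congrFun h' j
      simp only [Pi.smul_apply, smul_eq_mul] at this
      exact mul_left_cancel₀ c.ne_zero this
  rw [hset]
  exact isClosed_eq
    (continuous_pair_vecMul (continuous_pi fun i =>
      (continuous_apply _).comp (continuous_subtype_val.comp continuous_snd)) continuous_fst)
    (continuous_pi fun j =>
      (continuous_apply _).comp (continuous_subtype_val.comp continuous_snd))

/-- Let `f : Ω_{r,s} → Ω_{r′,s′}` be continuous and let
`g : cl(D_{r,s}) → cl(D_{r′,s′})` be continuous with `g(∂D_{r,s}) ⊆ ∂D_{r′,s′}`.
If for every `Z ∈ Ω_{r,s}` and every nonzero row vector `a`, writing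
`g([a, aZ]) = [a′, b′]` one has `a′ · f(Z) = b′`, then `f` is a proper map. -/
theorem statement9 (r s r' s' : ℕ) (hr : 1 ≤ r) (hs : 1 ≤ s) (hr' : 1 ≤ r') (hs' : 1 ≤ s')
    (f : OmegaI r s → OmegaI r' s') (hf : Continuous f)
    (g : closure (genBall r s) → closure (genBall r' s')) (hg : Continuous g)
    (hbdry : ∀ p : closure (genBall r s),
      (p : ℙ ℂ (Fin (r + s) → ℂ)) ∈ genBallBdry r s →
      ((g p : ℙ ℂ (Fin (r' + s') → ℂ)) ∈ genBallBdry r' s'))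
    (hcomp : ∀ (Z : Matrix (Fin r) (Fin s) ℂ) (hZ : Z ∈ OmegaI r s)
      (a : Fin r → ℂ) (ha : a ≠ 0) (h0 : Fin.append a (a ᵥ* Z) ≠ 0)
      (hmem : Projectivization.mk ℂ (Fin.append a (a ᵥ* Z)) h0 ∈ closure (genBall r s))
      (a' : Fin r' → ℂ) (b' : Fin s' → ℂ) (h0' : Fin.append a' b' ≠ 0),
      (g ⟨Projectivization.mk ℂ (Fin.append a (a ᵥ* Z)) h0, hmem⟩ : ℙ ℂ (Fin (r' + s') → ℂ))
          = Projectivization.mk ℂ (Fin.append a' b') h0' →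
      a' ᵥ* (f ⟨Z, hZ⟩ : Matrix (Fin r') (Fin s') ℂ) = b') :
    ∀ K : Set (OmegaI r' s'), IsCompact K → IsCompact (f ⁻¹' K) := by
  intro K hK
  rw [Subtype.isCompact_iff, isCompact_iff_ultrafilter_le_nhds']
  intro U hT
  set T : Set (Matrix (Fin r) (Fin s) ℂ) := Subtype.val '' (f ⁻¹' K) with hTdef
  have hTΩ : T ⊆ OmegaI r s := by rintro _ ⟨z, _, rfl⟩; exact z.2
  -- the box bound
  set B : Set (Matrix (Fin r) (Fin s) ℂ) :=
    Set.univ.pi fun _ : Fin r => Set.univ.pi fun _ : Fin s => Metric.closedBall (0:ℂ) 1 with hBdef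
  have hΩB : OmegaI r s ⊆ B := by
    intro Z hΩ
    intro i _
    intro j _
    simp only [Metric.mem_closedBall, dist_zero_right]
    have hb0 : (Pi.single i (1:ℂ) : Fin r → ℂ) ≠ 0 := by
      intro h
      have := congrFun h i
      simp at this
    have hlt := row_lt_of_posDef hΩ hb0
    rw [Matrix.single_one_vecMul] at hlt
    have hsum : ∑ k, ‖(Pi.single i (1:ℂ) : Fin r → ℂ) k‖ ^ 2 = 1 := by
      rw [Finset.sum_eq_single i]
      · simp
      · intro k _ hk; simp [Pi.single_apply, hk]
      · intro h; exact absurd (Finset.mem_univ i) h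
    rw [hsum] at hlt
    change ∑ j, ‖Z i j‖ ^ 2 < 1 at hlt
    have hle : ‖Z i j‖ ^ 2 ≤ ∑ j', ‖Z i j'‖ ^ 2 :=
      Finset.single_le_sum (f := fun j' => ‖Z i j'‖ ^ 2) (fun _ _ => by positivity)
        (Finset.mem_univ j)
    nlinarith [norm_nonneg (Z i j)]
  have hbox : IsCompact B :=
    isCompact_univ_pi fun _ => isCompact_univ_pi fun _ => isCompact_closedBall _ _
  obtain ⟨Zinf, -, hUinf⟩ := hbox.ultrafilter_le_nhds U
    (le_principal_iff.mpr (Filter.mem_of_superset hT (hTdef ▸ hTΩ.trans hΩB)))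
  have hclT : Zinf ∈ closure T := mem_closure_iff_ultrafilter.mpr ⟨U, hT, hUinf⟩
  have hOinf : Zinf ∈ OmegaI r s := by
    by_contra hnot
    obtain ⟨a, ha0, hge⟩ := exists_row_ge_of_not_posDef hnot
    have hclineq : ∑ j, ‖(a ᵥ* Zinf) j‖ ^ 2 ≤ ∑ i, ‖a i‖ ^ 2 := by
      have hc1 : Continuous fun Z : Matrix (Fin r) (Fin s) ℂ => ∑ j, ‖(a ᵥ* Z) j‖ ^ 2 :=
        continuous_finset_sum _ fun j _ =>
          (((continuous_apply j).comp (continuous_vecMul_right a)).norm.pow 2)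
      have hcl : IsClosed {Z : Matrix (Fin r) (Fin s) ℂ |
          ∑ j, ‖(a ᵥ* Z) j‖ ^ 2 ≤ ∑ i, ‖a i‖ ^ 2} := isClosed_le hc1 continuous_const
      exact closure_minimal (fun Z hZ => le_of_lt (row_lt_of_posDef (hTΩ hZ) ha0)) hcl hclT
    have heq : ∑ i, ‖a i‖ ^ 2 = ∑ j, ‖(a ᵥ* Zinf) j‖ ^ 2 := le_antisymm hge hclineq
    have hv0 : ∀ Z : Matrix (Fin r) (Fin s) ℂ, Fin.append a (a ᵥ* Z) ≠ 0 :=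
      fun Z => append_ne_zero ha0 _
    set pfun : Matrix (Fin r) (Fin s) ℂ → ℙ ℂ (Fin (r + s) → ℂ) :=
      fun Z => prMap (r + s) ⟨Fin.append a (a ᵥ* Z), hv0 Z⟩ with hpfun
    have hpcont : Continuous pfun :=
      (isOpenQuotientMap_prMap _).continuous.comp
        (Continuous.subtype_mk (continuous_appendFun continuous_const
          (continuous_vecMul_right a)) _)
    have hpT : ∀ Z ∈ OmegaI r s, pfun Z ∈ genBall r s := by
      intro Z hZ
      refine (mk_mem_genBall_iff _ (hv0 Z)).mpr ?_
      simp only [Fin.append_left, Fin.append_right]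
      exact row_lt_of_posDef hZ ha0
    have hmemA : ∀ x ∈ closure T, pfun x ∈ closure (genBall r s) := by
      intro x hx
      have h1 : pfun x ∈ closure (pfun '' T) :=
        image_closure_subset_closure_image hpcont ⟨x, hx, rfl⟩
      refine closure_mono ?_ h1
      rintro _ ⟨Z, hZ, rfl⟩
      exact hpT Z (hTΩ hZ)
    set qA : closure T → closure (genBall r s) :=
      fun x => ⟨pfun x.1, hmemA x.1 x.2⟩ with hqA
    have hqAcont : Continuous qA :=
      Continuous.subtype_mk (hpcont.comp continuous_subtype_val) _
    have hrange : Set.range (Subtype.val : closure T → _) ∈ U := by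
      rw [Subtype.range_val]
      exact Filter.mem_of_superset hT subset_closure
    set UA : Ultrafilter (closure T) := U.comap Subtype.val_injective hrange with hUA
    have hmapval : Filter.Tendsto Subtype.val (UA : Filter (closure T)) (𝓝 Zinf) := by
      rw [hUA, Ultrafilter.coe_comap]
      exact Filter.map_comap_le.trans hUinf
    set zinf : closure T := ⟨Zinf, hclT⟩ with hzinf
    have hidA : Filter.Tendsto (fun x : closure T => x) UA (𝓝 zinf) :=
      tendsto_subtype_rng.mpr hmapval
    have hgq : Filter.Tendsto (fun x : closure T => (g (qA x) : ℙ ℂ (Fin (r' + s') → ℂ)))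
        UA (𝓝 ((g (qA zinf) : ℙ ℂ (Fin (r' + s') → ℂ)))) :=
      (((continuous_subtype_val.comp hg).comp hqAcont).tendsto zinf).comp hidA
    set F : closure T → Matrix (Fin r') (Fin s') ℂ :=
      fun x => if h : x.1 ∈ OmegaI r s then (f ⟨x.1, h⟩ : Matrix (Fin r') (Fin s') ℂ)
        else 0 with hF
    have hTA : {x : closure T | x.1 ∈ T} ∈ UA := by
      rw [hUA]
      exact (Ultrafilter.mem_comap _ _ _).mpr
        (Filter.mem_of_superset hT (fun z hz => ⟨⟨z, subset_closure hz⟩, hz, rfl⟩))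
    have hK' : IsCompact (Subtype.val '' K : Set (Matrix (Fin r') (Fin s') ℂ)) :=
      hK.image continuous_subtype_val
    have hFK : ∀ x : closure T, x.1 ∈ T → F x ∈ Subtype.val '' K := by
      intro x hx
      have hΩx : x.1 ∈ OmegaI r s := hTΩ hx
      obtain ⟨w, hw, hwval⟩ := hx
      rw [hF]
      simp only
      rw [dif_pos hΩx]
      have : (⟨x.1, hΩx⟩ : OmegaI r s) = w := Subtype.ext hwval.symm
      rw [this]
      exact ⟨f w, hw, rfl⟩
    obtain ⟨Wv, hWvK, hWlim⟩ := hK'.ultrafilter_le_nhds (UA.map F)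
      (le_principal_iff.mpr (Filter.mem_map.mpr
        (Filter.mem_of_superset hTA fun x hx => hFK x hx)))
    obtain ⟨w', hw'K, hw'val⟩ := hWvK
    have hWtendsto : Filter.Tendsto F UA (𝓝 Wv) := hWlim
    have hpair : Filter.Tendsto (fun x : closure T =>
        (F x, (g (qA x) : ℙ ℂ (Fin (r' + s') → ℂ)))) UA
        (𝓝 (Wv, (g (qA zinf) : ℙ ℂ (Fin (r' + s') → ℂ)))) :=
      hWtendsto.prodMk_nhds hgq
    have hrel : ∀ x : closure T, x.1 ∈ T →
        (F x, (g (qA x) : ℙ ℂ (Fin (r' + s') → ℂ))) ∈ relSet r' s' := by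
      intro x hx v hv hveq
      have hΩx : x.1 ∈ OmegaI r s := hTΩ hx
      have hFx : F x = (f ⟨x.1, hΩx⟩ : Matrix (Fin r') (Fin s') ℂ) := by
        rw [hF]; simp only; rw [dif_pos hΩx]
      have happ : Fin.append (fun i => v (Fin.castAdd s' i)) (fun j => v (Fin.natAdd r' j))
          = v := Fin.append_castAdd_natAdd
      have h0' : Fin.append (fun i => v (Fin.castAdd s' i)) (fun j => v (Fin.natAdd r' j))
          ≠ 0 := by rw [happ]; exact hv
      have hgeq : (g ⟨Projectivization.mk ℂ (Fin.append a (a ᵥ* x.1)) (hv0 x.1),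
          hmemA x.1 x.2⟩ : ℙ ℂ (Fin (r' + s') → ℂ))
          = Projectivization.mk ℂ (Fin.append (fun i => v (Fin.castAdd s' i))
              (fun j => v (Fin.natAdd r' j))) h0' := by
        have e1 : (⟨Projectivization.mk ℂ (Fin.append a (a ᵥ* x.1)) (hv0 x.1),
            hmemA x.1 x.2⟩ : closure (genBall r s)) = qA x := Subtype.ext rfl
        rw [e1]
        have e2 : Projectivization.mk ℂ (Fin.append (fun i => v (Fin.castAdd s' i))
            (fun j => v (Fin.natAdd r' j))) h0' = Projectivization.mk ℂ v hv :=
          (Projectivization.mk_eq_mk_iff' ℂ _ _ _ _).mpr ⟨1, by rw [one_smul]; exact happ.symm⟩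
        rw [e2]
        exact hveq
      have hkey := hcomp x.1 hΩx a ha0 (hv0 x.1) (hmemA x.1 x.2)
        (fun i => v (Fin.castAdd s' i)) (fun j => v (Fin.natAdd r' j)) h0' hgeq
      show (fun i => v (Fin.castAdd s' i)) ᵥ* F x = fun j => v (Fin.natAdd r' j)
      rw [hFx]
      exact hkey
    have hlimrel : (Wv, (g (qA zinf) : ℙ ℂ (Fin (r' + s') → ℂ))) ∈ relSet r' s' :=
      (isClosed_relSet r' s').mem_of_tendsto hpair
        (Filter.mem_of_superset hTA fun x hx => hrel x hx)
    -- boundary information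
    have hbdinf : (qA zinf : ℙ ℂ (Fin (r + s) → ℂ)) ∈ genBallBdry r s := by
      show pfun Zinf ∈ genBallBdry r s
      refine (mk_mem_bdry_iff _ (hv0 Zinf)).mpr ?_
      simp only [Fin.append_left, Fin.append_right]
      exact heq
    have hbd' := hbdry (qA zinf) hbdinf
    set P := (g (qA zinf) : ℙ ℂ (Fin (r' + s') → ℂ)) with hP
    have hrelP := hlimrel P.rep P.rep_nonzero (P.mk_rep).symm
    by_cases ha' : (fun i => P.rep (Fin.castAdd s' i)) = 0
    · have hnat : (fun j => P.rep (Fin.natAdd r' j)) = 0 := by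
        rw [← hrelP, ha', Matrix.zero_vecMul]
      apply P.rep_nonzero
      funext k
      induction k using Fin.addCases with
      | left i => exact congrFun ha' i
      | right j => exact congrFun hnat j
    · have hWΩ : (1 - Wv * Wvᴴ).PosDef := by rw [← hw'val]; exact w'.2
      have hlt := row_lt_of_posDef hWΩ ha'
      rw [hrelP] at hlt
      have hbd'' : ∑ i, ‖P.rep (Fin.castAdd s' i)‖ ^ 2
          = ∑ j, ‖P.rep (Fin.natAdd r' j)‖ ^ 2 := hbd'
      rw [hbd''] at hlt
      exact lt_irrefl _ hlt
  -- Zinf ∈ Ω, now conclude Zinf ∈ T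
  refine ⟨Zinf, ?_, hUinf⟩
  have hΩmem : Set.range (Subtype.val : OmegaI r s → _) ∈ U := by
    rw [Subtype.range_val]
    exact Filter.mem_of_superset hT hTΩ
  set V : Ultrafilter (OmegaI r s) := U.comap Subtype.val_injective hΩmem with hV
  have hVT : f ⁻¹' K ∈ V := by
    rw [hV]
    refine (Ultrafilter.mem_comap _ _ _).mpr (Filter.mem_of_superset hT ?_)
    rintro _ ⟨z, hz, rfl⟩
    exact ⟨z, hz, rfl⟩
  have hvalV : Filter.Tendsto Subtype.val (V : Filter (OmegaI r s)) (𝓝 Zinf) := by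
    rw [hV, Ultrafilter.coe_comap]
    exact Filter.map_comap_le.trans hUinf
  have hidV : Filter.Tendsto (fun x => x) (V : Filter (OmegaI r s))
      (𝓝 (⟨Zinf, hOinf⟩ : OmegaI r s)) := tendsto_subtype_rng.mpr hvalV
  have hfV : Filter.Tendsto f (V : Filter (OmegaI r s)) (𝓝 (f ⟨Zinf, hOinf⟩)) :=
    ((hf.tendsto _).comp hidV)
  have hfmem : f ⟨Zinf, hOinf⟩ ∈ K := hK.isClosed.mem_of_tendsto hfV hVT
  exact ⟨⟨Zinf, hOinf⟩, hfmem, rfl⟩
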